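/- Let q be an odd prime power and g ≥ 1 an integer such that 2g + 1 divides q + 1. Then the affine curve x^2 = y^{2g+1} + 1 has exactly q^2 + 2gq points over F_{q^2}, i.e., #{(x, y) ∈ F_{q^2} × F_{q^2} : x^2 = y^{2g+1} + 1} = q^2 + 2gq. -/

import Mathlib

set_option linter.unusedSectionVars false
set_option linter.unusedVariables false

open Finset

section Aux

variable {F : Type*} [Field F] [Fintype F] [DecidableEq F]

/-- number of d-th roots of unity in a finite field, when d divides #Fˣ -/
lemma cardPowEq {d : ℕ} (hd : 0 < d) (hdvd : d ∣ Fintype.card F - 1) :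
    (univ.filter fun z : F => z ^ d = 1).card = d := by
  obtain ⟨g, hg⟩ := IsCyclic.exists_generator (α := Fˣ)
  have hord : orderOf g = Fintype.card F - 1 := by
    rw [orderOf_eq_card_of_forall_mem_zpowers hg, Nat.card_eq_fintype_card, Fintype.card_units]
  have hN : 0 < Fintype.card F - 1 := hord ▸ orderOf_pos g
  set N := Fintype.card F - 1 with hNdef
  have hζord : orderOf (g ^ (N / d)) = d := by
    rw [orderOf_pow, hord, Nat.gcd_eq_right (Nat.div_dvd_of_dvd hdvd),
      Nat.div_div_self hdvd hN.ne']
  have hprim : IsPrimitiveRoot ((g ^ (N / d) : Fˣ) : F) d := by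
    rw [IsPrimitiveRoot.coe_units_iff]
    have h := IsPrimitiveRoot.orderOf (g ^ (N / d))
    rwa [hζord] at h
  have : (univ.filter fun z : F => z ^ d = 1) = Polynomial.nthRootsFinset d (1 : F) := by
    ext x
    simp [Polynomial.mem_nthRootsFinset hd]
  rw [this, hprim.card_nthRootsFinset]

variable {q : ℕ}

lemma fact_qsq (h1 : 1 ≤ q) : q ^ 2 - 1 = (q - 1) * (q + 1) := by
  obtain ⟨t, rfl⟩ : ∃ t, q = t + 1 := ⟨q - 1, by omega⟩
  have h2 : (t + 1) ^ 2 = t * (t + 1 + 1) + 1 := by ring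
  simp only [Nat.add_sub_cancel]
  omega

lemma pow_q_of (hq1 : 1 ≤ q) {x : F} (h : x ^ (q - 1) = 1) : x ^ q = x := by
  have : q = (q - 1) + 1 := by omega
  rw [this, pow_succ, h, one_mul]

lemma pow_pred (hq1 : 1 ≤ q) {x : F} (hx : x ≠ 0) (h : x ^ q = x) : x ^ (q - 1) = 1 := by
  have h2 : x ^ (q - 1) * x = x ^ q := by
    rw [← pow_succ]; congr 1; omega
  exact mul_right_cancel₀ hx (h2.trans (h.trans (one_mul x).symm))

lemma ne_zero_of_rou {d : ℕ} (hd : 0 < d) {x : F} (h : x ^ d = 1) : x ≠ 0 := by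
  rintro rfl
  rw [zero_pow hd.ne'] at h
  exact zero_ne_one h

/-- S = F_q as a finset, cardinality -/
lemma cardSq (hcard : Fintype.card F = q ^ 2) (h3 : 3 ≤ q) :
    (univ.filter fun v : F => v ^ q = v).card = q := by
  have hq1 : 1 ≤ q := by omega
  have hfact : Fintype.card F - 1 = (q - 1) * (q + 1) := by
    rw [hcard]; exact fact_qsq (by omega)
  have hsplit : (univ.filter fun v : F => v ^ q = v)
      = insert (0 : F) (univ.filter fun v : F => v ^ (q - 1) = 1) := by
    ext v
    simp only [mem_filter, mem_univ, true_and, mem_insert]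
    constructor
    · intro h
      rcases eq_or_ne v 0 with rfl | hv
      · exact Or.inl rfl
      · exact Or.inr (pow_pred hq1 hv h)
    · rintro (rfl | h)
      · rw [zero_pow (by omega)]
      · exact pow_q_of hq1 h
  rw [hsplit, card_insert_of_notMem, cardPowEq (by omega) ⟨q + 1, hfact⟩]
  · omega
  · simp only [mem_filter, mem_univ, true_and]
    rw [zero_pow (by omega)]
    exact fun h => zero_ne_one h

lemma chi_eq_one (hcard : Fintype.card F = q ^ 2) (hchar2 : ringChar F ≠ 2) (h3 : 3 ≤ q)
    {E : ℕ} (hE : Fintype.card F / 2 = (q - 1) * E) {v : F} (hv0 : v ≠ 0)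
    (hv : v ^ (q - 1) = 1) : quadraticChar F v = 1 := by
  rw [quadraticChar_one_iff_isSquare hv0, FiniteField.isSquare_iff hchar2 hv0, hE,
    pow_mul, hv, one_pow]


lemma sumS_line (hcard : Fintype.card F = q ^ 2) (hchar2 : ringChar F ≠ 2) (h3 : 3 ≤ q)
    (hE : Fintype.card F / 2 = (q - 1) * E)
    (hfrobA : ∀ a b : F, (a + b) ^ q = a ^ q + b ^ q)
    (hScard : (univ.filter fun v : F => v ^ q = v).card = q)
    (hchiS : ∀ v : F, v ≠ 0 → v ^ (q - 1) = 1 → quadraticChar F v = 1)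
    {c : F} (hc : c ^ q ≠ c) :
    ∑ u ∈ univ.filter (fun v : F => v ^ q = v), quadraticChar F (1 + c * u)
      = - quadraticChar F c := by
  have hq1 : 1 ≤ q := by omega
  set χ := quadraticChar F with hχ
  set S := univ.filter (fun v : F => v ^ q = v) with hS
  have memS : ∀ {v : F}, v ∈ S ↔ v ^ q = v := fun {v} => by simp [hS]
  have h0S : (0 : F) ∈ S := memS.mpr (by rw [zero_pow (by omega)])
  have hsubS : ∀ {a b : F}, a ^ q = a → b ^ q = b → (a - b) ^ q = a - b := by
    intro a b ha hb
    have h := hfrobA (a - b) b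
    rw [sub_add_cancel, ha, hb] at h
    linear_combination -h
  have hdivS : ∀ {a b : F}, a ^ q = a → b ^ q = b → (a / b) ^ q = a / b := by
    intro a b ha hb
    rw [div_pow, ha, hb]
  have hchiS' : ∀ v ∈ S, v ≠ 0 → χ v = 1 := by
    intro v hv hv0
    refine hchiS v hv0 ?_
    have hvq := memS.mp hv
    have h2 : v ^ (q - 1) * v = v ^ q := by rw [← pow_succ]; congr 1; omega
    exact mul_right_cancel₀ hv0 (h2.trans (hvq.trans (one_mul v).symm))
  -- injectivity of (a, b) ↦ a + b * c on S ×ˢ S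
  have hinj : ∀ p1 ∈ S ×ˢ S, ∀ p2 ∈ S ×ˢ S,
      p1.1 + p1.2 * c = p2.1 + p2.2 * c → p1 = p2 := by
    rintro ⟨a, b⟩ h1 ⟨a', b'⟩ h2 h
    simp only [mem_product, memS] at h1 h2
    by_cases hbb : b = b'
    · subst hbb
      have : a = a' := by linear_combination h
      simp [this]
    · exfalso
      have hb0 : b' - b ≠ 0 := sub_ne_zero.mpr (Ne.symm hbb)
      have hcval : c = (a - a') / (b' - b) := by
        rw [eq_div_iff hb0]
        linear_combination -h
      apply hc
      rw [hcval]
      exact hdivS (hsubS h1.1 h2.1) (hsubS h2.2 h1.2)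
  have himg : (S ×ˢ S).image (fun p : F × F => p.1 + p.2 * c) = univ := by
    apply eq_univ_of_card
    rw [card_image_of_injOn (fun p1 hp1 p2 hp2 h => hinj p1 hp1 p2 hp2 h),
      card_product, hScard, hcard, sq]
  have hzero : ∑ p ∈ S ×ˢ S, χ (p.1 + p.2 * c) = 0 := by
    have h := quadraticChar_sum_zero hchar2
    rw [← himg, Finset.sum_image hinj] at h
    exact h
  rw [Finset.sum_product, ← Finset.add_sum_erase S _ h0S] at hzero
  -- the a = 0 term
  have h00 : ∑ b ∈ S, χ (0 + b * c) = ((q : ℤ) - 1) * χ c := by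
    have : ∀ b ∈ S, χ (0 + b * c) = χ b * χ c := by
      intro b hb; rw [zero_add, map_mul]
    rw [Finset.sum_congr rfl this, ← Finset.sum_mul]
    congr 1
    rw [← Finset.add_sum_erase S _ h0S]
    have hz : χ (0 : F) = 0 := quadraticChar_zero
    rw [hz, zero_add]
    have : ∀ b ∈ S.erase 0, χ b = 1 := by
      intro b hb
      exact hchiS' b (mem_of_mem_erase hb) (ne_of_mem_erase hb)
    rw [Finset.sum_congr rfl this, Finset.sum_const, card_erase_of_mem h0S, hScard,
      nsmul_eq_mul, mul_one]
    push_cast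
    omega
  have hrest : ∀ a ∈ S.erase 0, ∑ b ∈ S, χ (a + b * c)
      = ∑ u ∈ S, χ (1 + c * u) := by
    intro a ha
    have ha0 : a ≠ 0 := ne_of_mem_erase ha
    have haS : a ∈ S := mem_of_mem_erase ha
    have haq : a ^ q = a := memS.mp haS
    refine Finset.sum_nbij' (fun b => b * a⁻¹) (fun u => u * a) ?_ ?_ ?_ ?_ ?_
    · intro b hb
      refine memS.mpr ?_
      show (b * a⁻¹) ^ q = b * a⁻¹
      have hh : b * a⁻¹ = b / a := by rw [div_eq_mul_inv]
      rw [hh]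
      exact hdivS (memS.mp hb) haq
    · intro u hu
      refine memS.mpr ?_
      show (u * a) ^ q = u * a
      rw [mul_pow, memS.mp hu, haq]
    · intro b hb
      show b * a⁻¹ * a = b
      field_simp
    · intro u hu
      show u * a * a⁻¹ = u
      field_simp
    · intro b hb
      show χ (a + b * c) = χ (1 + c * (b * a⁻¹))
      have hh : a + b * c = a * (1 + c * (b * a⁻¹)) := by
        field_simp
      rw [hh, map_mul, hchiS' a haS ha0, one_mul]
  rw [Finset.sum_congr rfl hrest, Finset.sum_const, card_erase_of_mem h0S, hScard,
    h00, nsmul_eq_mul] at hzero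
  have hcast : ((q - 1 : ℕ) : ℤ) = (q : ℤ) - 1 := by push_cast; omega
  rw [hcast] at hzero
  have hq0 : ((q : ℤ) - 1) ≠ 0 := by
    have : (3 : ℤ) ≤ q := by exact_mod_cast h3
    omega
  have : ((q : ℤ) - 1) * (χ c + ∑ u ∈ S, χ (1 + c * u)) = 0 := by ring_nf; linarith [hzero]
  rcases mul_eq_zero.mp this with h | h
  · exact absurd h hq0
  · linarith


/-- doc -/
lemma sumK_in (hchar2 : ringChar F ≠ 2) (h3 : 3 ≤ q) (hoddq : Odd q)
    (hKcard : (univ.filter fun v : F => v ^ (q - 1) = 1).card = q - 1)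
    (hchiS : ∀ v : F, v ≠ 0 → v ^ (q - 1) = 1 → quadraticChar F v = 1)
    (hfrobA : ∀ a b : F, (a + b) ^ q = a ^ q + b ^ q)
    {c : F} (hc : c ^ (q - 1) = 1) :
    ∑ v ∈ univ.filter (fun v : F => v ^ (q - 1) = 1), quadraticChar F (1 + c * v)
      = (q : ℤ) - 2 := by
  have hq1 : 1 ≤ q := by omega
  set χ := quadraticChar F with hχ
  set K := univ.filter (fun v : F => v ^ (q - 1) = 1) with hK
  have memK : ∀ {v : F}, v ∈ K ↔ v ^ (q - 1) = 1 := fun {v} => by simp [hK]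
  have hc0 : c ≠ 0 := ne_zero_of_rou (by omega) hc
  -- reindex v ↦ c * v
  have step1 : ∑ v ∈ K, χ (1 + c * v) = ∑ w ∈ K, χ (1 + w) := by
    refine Finset.sum_nbij' (fun v => c * v) (fun w => c⁻¹ * w) ?_ ?_ ?_ ?_ ?_
    · intro v hv
      refine memK.mpr ?_
      show (c * v) ^ (q - 1) = 1
      rw [mul_pow, hc, memK.mp hv, one_mul]
    · intro w hw
      refine memK.mpr ?_
      show (c⁻¹ * w) ^ (q - 1) = 1
      rw [mul_pow, inv_pow, hc, inv_one, memK.mp hw, one_mul]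
    · intro v hv
      show c⁻¹ * (c * v) = v
      field_simp
    · intro w hw
      show c * (c⁻¹ * w) = w
      field_simp
    · intro v hv
      rfl
  rw [step1]
  -- now evaluate ∑_{w ∈ K} χ (1 + w)
  have hm1 : (-1 : F) ∈ K := by
    refine memK.mpr ?_
    have : Even (q - 1) := by
      rcases hoddq with ⟨t, ht⟩
      exact ⟨t, by omega⟩
    exact this.neg_one_pow
  rw [← Finset.add_sum_erase K _ hm1]
  have h1 : χ (1 + (-1 : F)) = 0 := by
    rw [add_neg_cancel]
    exact quadraticChar_zero
  rw [h1, zero_add]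
  have hterm : ∀ w ∈ K.erase (-1), χ (1 + w) = 1 := by
    intro w hw
    have hwK := mem_of_mem_erase hw
    have hw1 : w ≠ -1 := ne_of_mem_erase hw
    have hw0 : (1 : F) + w ≠ 0 := by
      intro h
      apply hw1
      linear_combination h
    refine hchiS _ hw0 ?_
    have hwq : w ^ q = w := pow_q_of hq1 (memK.mp hwK)
    have hq' : (1 + w) ^ q = 1 + w := by rw [hfrobA 1 w, one_pow, hwq]
    exact pow_pred hq1 hw0 hq'
  rw [Finset.sum_congr rfl hterm, Finset.sum_const, card_erase_of_mem hm1, hKcard,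
    nsmul_eq_mul, mul_one]
  omega



lemma sumK_out (hcard : Fintype.card F = q ^ 2) (hchar2 : ringChar F ≠ 2) (h3 : 3 ≤ q)
    (hE : Fintype.card F / 2 = (q - 1) * E)
    (hfrobA : ∀ a b : F, (a + b) ^ q = a ^ q + b ^ q)
    (hScard : (univ.filter fun v : F => v ^ q = v).card = q)
    (hchiS : ∀ v : F, v ≠ 0 → v ^ (q - 1) = 1 → quadraticChar F v = 1)
    {c : F} (hc : c ^ q ≠ c) :
    ∑ v ∈ univ.filter (fun v : F => v ^ (q - 1) = 1), quadraticChar F (1 + c * v)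
      = - quadraticChar F c - 1 := by
  have hq1 : 1 ≤ q := by omega
  have hline := sumS_line hcard hchar2 h3 hE hfrobA hScard hchiS hc
  have hSins : (univ.filter fun v : F => v ^ q = v)
      = insert (0 : F) (univ.filter fun v : F => v ^ (q - 1) = 1) := by
    ext v
    simp only [mem_filter, mem_univ, true_and, mem_insert]
    constructor
    · intro h
      rcases eq_or_ne v 0 with rfl | hv
      · exact Or.inl rfl
      · exact Or.inr (pow_pred hq1 hv h)
    · rintro (rfl | h)
      · rw [zero_pow (by omega)]
      · exact pow_q_of hq1 h
  have h0K : (0 : F) ∉ (univ.filter fun v : F => v ^ (q - 1) = 1) := by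
    simp only [mem_filter, mem_univ, true_and]
    rw [zero_pow (by omega)]
    exact fun h => zero_ne_one h
  rw [hSins, Finset.sum_insert h0K] at hline
  rw [mul_zero, add_zero, map_one] at hline
  linarith

lemma fib_card {z : F} (hq2 : 2 ≤ q) {s₀ : F} (hs0 : s₀ ≠ 0) (hs0z : s₀ ^ (q - 1) = z) :
    (univ.filter fun y : F => y ≠ 0 ∧ y ^ (q - 1) = z).card
      = (univ.filter fun v : F => v ^ (q - 1) = 1).card := by
  have hz0 : z ≠ 0 := hs0z ▸ pow_ne_zero _ hs0
  refine Finset.card_nbij' (fun y => y * s₀⁻¹) (fun u => s₀ * u) ?_ ?_ ?_ ?_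
  · intro y hy
    simp only [mem_coe, mem_filter, mem_univ, true_and] at hy ⊢
    show (y * s₀⁻¹) ^ (q - 1) = 1
    rw [mul_pow, inv_pow, hs0z, hy.2, mul_inv_cancel₀ hz0]
  · intro u hu
    simp only [mem_coe, mem_filter, mem_univ, true_and] at hu ⊢
    have hu0 : u ≠ 0 := ne_zero_of_rou (by omega) hu
    constructor
    · exact mul_ne_zero hs0 hu0
    · show (s₀ * u) ^ (q - 1) = z
      rw [mul_pow, hs0z, hu, mul_one]
  · intro y hy
    show s₀ * (y * s₀⁻¹) = y
    field_simp
  · intro u hu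
    show s₀ * u * s₀⁻¹ = u
    field_simp

lemma fib_sum (hcard : Fintype.card F = q ^ 2) (hchar2 : ringChar F ≠ 2) (h3 : 3 ≤ q)
    (hoddq : Odd q) {m e m' : ℕ} (hm : Odd m) (hm1 : 1 ≤ m)
    (hE : Fintype.card F / 2 = (q - 1) * (m * e))
    (hfrobA : ∀ a b : F, (a + b) ^ q = a ^ q + b ^ q)
    (hScard : (univ.filter fun v : F => v ^ q = v).card = q)
    (hKcard : (univ.filter fun v : F => v ^ (q - 1) = 1).card = q - 1)
    (hchiS : ∀ v : F, v ≠ 0 → v ^ (q - 1) = 1 → quadraticChar F v = 1)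
    (hmm' : m * m' % (q - 1) = 1)
    {z : F} {s₀ : F} (hs0 : s₀ ≠ 0) (hs0z : s₀ ^ (q - 1) = z) :
    ∑ y ∈ univ.filter (fun y : F => y ≠ 0 ∧ y ^ (q - 1) = z), quadraticChar F (y ^ m + 1)
      = if z ^ m = 1 then (q : ℤ) - 2
        else -(if z ^ (m * e) = 1 then (1 : ℤ) else -1) - 1 := by
  have hq1 : 1 ≤ q := by omega
  set χ := quadraticChar F with hχ
  have hz0 : z ≠ 0 := hs0z ▸ pow_ne_zero _ hs0
  have hKpow : ∀ w : F, w ^ (q - 1) = 1 → w ^ (m * m') = w := by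
    intro w hw
    have hd : m * m' = (q - 1) * (m * m' / (q - 1)) + 1 := by
      conv_lhs => rw [← Nat.div_add_mod (m * m') (q - 1)]
      rw [hmm']
    rw [hd, pow_add, pow_mul, hw, one_pow, one_mul, pow_one]
  -- reindex the fiber sum to a sum over K
  have step : ∑ y ∈ univ.filter (fun y : F => y ≠ 0 ∧ y ^ (q - 1) = z), χ (y ^ m + 1)
      = ∑ v ∈ univ.filter (fun v : F => v ^ (q - 1) = 1), χ (1 + s₀ ^ m * v) := by
    refine Finset.sum_nbij' (fun y => (y * s₀⁻¹) ^ m) (fun v => s₀ * v ^ m') ?_ ?_ ?_ ?_ ?_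
    · intro y hy
      simp only [mem_filter, mem_univ, true_and] at hy ⊢
      show ((y * s₀⁻¹) ^ m) ^ (q - 1) = 1
      rw [← pow_mul, mul_comm m (q - 1), pow_mul, mul_pow, inv_pow, hs0z, hy.2,
        mul_inv_cancel₀ hz0, one_pow]
    · intro v hv
      simp only [mem_filter, mem_univ, true_and] at hv ⊢
      have hv0 : v ≠ 0 := ne_zero_of_rou (by omega) hv
      refine ⟨mul_ne_zero hs0 (pow_ne_zero _ hv0), ?_⟩
      show (s₀ * v ^ m') ^ (q - 1) = z
      rw [mul_pow, hs0z, ← pow_mul, mul_comm m' (q - 1), pow_mul, hv, one_pow, mul_one]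
    · intro y hy
      simp only [mem_filter, mem_univ, true_and] at hy
      show s₀ * ((y * s₀⁻¹) ^ m) ^ m' = y
      have hw : (y * s₀⁻¹) ^ (q - 1) = 1 := by
        rw [mul_pow, inv_pow, hs0z, hy.2, mul_inv_cancel₀ hz0]
      rw [← pow_mul, hKpow _ hw]
      field_simp
    · intro v hv
      simp only [mem_filter, mem_univ, true_and] at hv
      show (s₀ * v ^ m' * s₀⁻¹) ^ m = v
      have hcan : s₀ * v ^ m' * s₀⁻¹ = v ^ m' := by field_simp
      rw [hcan, ← pow_mul, mul_comm m' m, hKpow _ hv]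
    · intro y hy
      simp only [mem_filter, mem_univ, true_and] at hy
      show χ (y ^ m + 1) = χ (1 + s₀ ^ m * (y * s₀⁻¹) ^ m)
      have hxy : s₀ * (y * s₀⁻¹) = y := by field_simp
      have : s₀ ^ m * (y * s₀⁻¹) ^ m = y ^ m := by
        rw [← mul_pow, hxy]
      rw [this, add_comm]
  rw [step]
  have hcq : (s₀ ^ m) ^ (q - 1) = z ^ m := by
    rw [← pow_mul, mul_comm m (q - 1), pow_mul, hs0z]
  by_cases hzm : z ^ m = 1
  · rw [if_pos hzm]
    exact sumK_in hchar2 h3 hoddq hKcard hchiS hfrobA (hcq.trans hzm)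
  · rw [if_neg hzm]
    have hcnz : s₀ ^ m ≠ 0 := pow_ne_zero _ hs0
    have hcq' : (s₀ ^ m) ^ q ≠ s₀ ^ m := by
      intro h
      apply hzm
      rw [← hcq]
      exact pow_pred hq1 hcnz h
    have hout := sumK_out hcard hchar2 h3 hE hfrobA hScard hchiS hcq'
    rw [hout]
    congr 1
    congr 1
    -- χ (s₀ ^ m) = if z ^ (m * e) = 1 then 1 else -1
    have hiff : χ s₀ = 1 ↔ z ^ (m * e) = 1 := by
      rw [hχ, quadraticChar_one_iff_isSquare hs0, FiniteField.isSquare_iff hchar2 hs0, hE,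
        pow_mul, hs0z]
    have hpow : χ (s₀ ^ m) = (χ s₀) ^ m := map_pow χ s₀ m
    rcases quadraticChar_dichotomy hs0 with h1 | h1
    · rw [if_pos (hiff.mp h1)]
      rw [hpow, h1, one_pow]
    · have hz1 : ¬ z ^ (m * e) = 1 := by
        intro hh
        rw [hiff.mpr hh] at h1
        norm_num at h1
      rw [if_neg hz1, hpow, h1, hm.neg_one_pow]


lemma image_eq_mu (hcard : Fintype.card F = q ^ 2) (h3 : 3 ≤ q)
    (hKcard : (univ.filter fun v : F => v ^ (q - 1) = 1).card = q - 1) :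
    (univ.filter fun y : F => y ≠ 0).image (fun y : F => y ^ (q - 1))
      = univ.filter (fun z : F => z ^ (q + 1) = 1) := by
  have hq1 : 1 ≤ q := by omega
  have hfact : Fintype.card F - 1 = (q - 1) * (q + 1) := by
    rw [hcard]; exact fact_qsq (by omega)
  have hsub : (univ.filter fun y : F => y ≠ 0).image (fun y : F => y ^ (q - 1))
      ⊆ univ.filter (fun z : F => z ^ (q + 1) = 1) := by
    intro z hz
    obtain ⟨y, hy, rfl⟩ := mem_image.mp hz
    have hy0 : y ≠ 0 := (mem_filter.mp hy).2
    simp only [mem_filter, mem_univ, true_and]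
    rw [← pow_mul, ← hfact]
    exact FiniteField.pow_card_sub_one_eq_one y hy0
  have hS0card : (univ.filter fun y : F => y ≠ 0).card = q ^ 2 - 1 := by
    rw [filter_ne', card_erase_of_mem (mem_univ 0), card_univ, hcard]
  have hcount : q ^ 2 - 1
      = ((univ.filter fun y : F => y ≠ 0).image (fun y : F => y ^ (q - 1))).card * (q - 1) := by
    rw [← hS0card,
      Finset.card_eq_sum_card_fiberwise
        (f := fun y : F => y ^ (q - 1))
        (t := (univ.filter fun y : F => y ≠ 0).image (fun y : F => y ^ (q - 1)))
        (fun x hx => mem_image_of_mem _ hx)]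
    refine (Finset.sum_congr rfl ?_).trans (by rw [Finset.sum_const, smul_eq_mul])
    intro z hz
    obtain ⟨y₀, hy₀, rfl⟩ := mem_image.mp hz
    have hy₀0 : y₀ ≠ 0 := (mem_filter.mp hy₀).2
    rw [filter_filter, fib_card (by omega) hy₀0 rfl, hKcard]
  have hmucard : (univ.filter fun z : F => z ^ (q + 1) = 1).card = q + 1 :=
    cardPowEq (by omega) ⟨q - 1, by rw [hfact]; ring⟩
  apply Finset.eq_of_subset_of_card_le hsub
  rw [hmucard]
  have himg : ((univ.filter fun y : F => y ≠ 0).image (fun y : F => y ^ (q - 1))).card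
      = q + 1 := by
    have h2 : (q + 1) * (q - 1) = q ^ 2 - 1 := by
      rw [fact_qsq (show 1 ≤ q by omega)]; ring
    refine Nat.eq_of_mul_eq_mul_right (show 0 < q - 1 by omega) ?_
    omega
  omega


lemma big_sum (hcard : Fintype.card F = q ^ 2) (hchar2 : ringChar F ≠ 2) (h3 : 3 ≤ q)
    (hoddq : Odd q) {m e m' : ℕ} (hm : Odd m) (hm1 : 1 ≤ m)
    (hme : q + 1 = 2 * (m * e))
    (hE : Fintype.card F / 2 = (q - 1) * (m * e))
    (hfrobA : ∀ a b : F, (a + b) ^ q = a ^ q + b ^ q)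
    (hScard : (univ.filter fun v : F => v ^ q = v).card = q)
    (hKcard : (univ.filter fun v : F => v ^ (q - 1) = 1).card = q - 1)
    (hchiS : ∀ v : F, v ≠ 0 → v ^ (q - 1) = 1 → quadraticChar F v = 1)
    (hmm' : m * m' % (q - 1) = 1) :
    ∑ y : F, quadraticChar F (y ^ m + 1) = ((m : ℤ) - 1) * q := by
  have hq1 : 1 ≤ q := by omega
  set χ := quadraticChar F with hχ
  set mu := univ.filter (fun z : F => z ^ (q + 1) = 1) with hmu
  have hfact : Fintype.card F - 1 = (q - 1) * (q + 1) := by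
    rw [hcard]; exact fact_qsq (by omega)
  have hmucard : mu.card = q + 1 := cardPowEq (by omega) ⟨q - 1, by rw [hfact]; ring⟩
  have hmcard : (univ.filter (fun z : F => z ^ m = 1)).card = m :=
    cardPowEq (by omega) ⟨(q - 1) * (2 * e), by rw [hfact, hme]; ring⟩
  have hmene : m * e ≠ 0 := by intro h; rw [h] at hme; omega
  have hmecard : (univ.filter (fun z : F => z ^ (m * e) = 1)).card = m * e :=
    cardPowEq (Nat.pos_of_ne_zero hmene) ⟨(q - 1) * 2, by rw [hfact, hme]; ring⟩
  have hmle : m ≤ q + 1 := Nat.le_of_dvd (by omega) ⟨2 * e, by rw [hme]; ring⟩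
  -- split off y = 0
  rw [← Finset.add_sum_erase univ _ (mem_univ (0 : F))]
  have h01 : χ ((0 : F) ^ m + 1) = 1 := by
    rw [zero_pow (by omega), zero_add, map_one]
  rw [h01, ← filter_ne' univ (0 : F)]
  have hmaps : ∀ y ∈ univ.filter (fun y : F => y ≠ 0), y ^ (q - 1) ∈ mu := by
    intro y hy
    rw [hmu, ← image_eq_mu hcard h3 hKcard]
    exact mem_image_of_mem _ hy
  rw [← Finset.sum_fiberwise_of_maps_to hmaps (fun y => χ (y ^ m + 1))]
  have hinner : ∀ z ∈ mu,
      (∑ y ∈ (univ.filter fun y : F => y ≠ 0).filter (fun y => y ^ (q - 1) = z),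
          χ (y ^ m + 1))
        = if z ^ m = 1 then (q : ℤ) - 2
          else -(if z ^ (m * e) = 1 then (1 : ℤ) else -1) - 1 := by
    intro z hz
    have hz' : z ∈ (univ.filter fun y : F => y ≠ 0).image (fun y : F => y ^ (q - 1)) := by
      rw [image_eq_mu hcard h3 hKcard]
      exact hz
    obtain ⟨y₀, hy₀, rfl⟩ := mem_image.mp hz'
    have hy₀0 : y₀ ≠ 0 := (mem_filter.mp hy₀).2
    rw [filter_filter]
    exact fib_sum hcard hchar2 h3 hoddq hm hm1 hE hfrobA hScard hKcard hchiS hmm' hy₀0 rfl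
  rw [Finset.sum_congr rfl hinner, Finset.sum_ite]
  have hmufilter : mu.filter (fun z => z ^ m = 1) = univ.filter (fun z : F => z ^ m = 1) := by
    ext z
    simp only [hmu, filter_filter, mem_filter, mem_univ, true_and]
    constructor
    · exact fun h => h.2
    · intro h
      refine ⟨?_, h⟩
      rw [hme, show 2 * (m * e) = m * (2 * e) by ring, pow_mul, h, one_pow]
  have hmufilter2 : mu.filter (fun z => z ^ (m * e) = 1)
      = univ.filter (fun z : F => z ^ (m * e) = 1) := by
    ext z
    simp only [hmu, filter_filter, mem_filter, mem_univ, true_and]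
    constructor
    · exact fun h => h.2
    · intro h
      refine ⟨?_, h⟩
      rw [hme, show 2 * (m * e) = (m * e) * 2 by ring, pow_mul, h, one_pow]
  have hBcard : (mu.filter (fun z => ¬ z ^ m = 1)).card = (q + 1) - m := by
    have h1 := Finset.card_filter_add_card_filter_not (s := mu)
      (p := fun z => z ^ m = 1)
    rw [hmufilter, hmcard, hmucard] at h1
    omega
  -- first part
  have hP1 : ∑ _z ∈ mu.filter (fun z => z ^ m = 1), ((q : ℤ) - 2)
      = (m : ℤ) * ((q : ℤ) - 2) := by
    rw [Finset.sum_const, hmufilter, hmcard, nsmul_eq_mul]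
  -- delta sums
  have hdelta_mu : (∑ z ∈ mu, if z ^ (m * e) = 1 then (1 : ℤ) else -1) = 0 := by
    rw [Finset.sum_ite, Finset.sum_const, Finset.sum_const]
    have h2 := Finset.card_filter_add_card_filter_not (s := mu)
      (p := fun z => z ^ (m * e) = 1)
    rw [hmufilter2, hmecard, hmucard] at h2
    rw [hmufilter2, hmecard]
    have h4 : (mu.filter fun z => ¬ z ^ (m * e) = 1).card = m * e := by omega
    rw [h4]
    simp only [nsmul_eq_mul, mul_one, mul_neg, mul_one]
    ring
  have hdelta_P : (∑ z ∈ mu.filter (fun z => z ^ m = 1),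
      if z ^ (m * e) = 1 then (1 : ℤ) else -1) = m := by
    have hconst : ∀ z ∈ mu.filter (fun z => z ^ m = 1),
        (if z ^ (m * e) = 1 then (1 : ℤ) else -1) = 1 := by
      intro z hz
      have hzm : z ^ m = 1 := (mem_filter.mp hz).2
      rw [if_pos]
      rw [pow_mul, hzm, one_pow]
    rw [Finset.sum_congr rfl hconst, Finset.sum_const, hmufilter, hmcard, nsmul_eq_mul, mul_one]
  have hdelta_B : (∑ z ∈ mu.filter (fun z => ¬ z ^ m = 1),
      if z ^ (m * e) = 1 then (1 : ℤ) else -1) = -(m : ℤ) := by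
    have h5 := Finset.sum_filter_add_sum_filter_not mu (fun z => z ^ m = 1)
      (fun z => if z ^ (m * e) = 1 then (1 : ℤ) else -1)
    rw [hdelta_mu] at h5
    rw [hdelta_P] at h5
    linarith
  have hP2 : ∑ z ∈ mu.filter (fun z => ¬ z ^ m = 1),
      (-(if z ^ (m * e) = 1 then (1 : ℤ) else -1) - 1)
      = (m : ℤ) - (((q : ℤ) + 1) - m) := by
    rw [Finset.sum_sub_distrib, Finset.sum_neg_distrib, hdelta_B, Finset.sum_const, hBcard]
    have hc : (((q + 1) - m : ℕ) : ℤ) = ((q : ℤ) + 1) - m := by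
      push_cast [Nat.cast_sub hmle]
      ring
    rw [nsmul_eq_mul, mul_one, hc]
    ring
  rw [hP1, hP2]
  ring

end Aux

theorem stmt7 (p n q g : ℕ) (hp : p.Prime) (hodd : p ≠ 2) (hq : q = p ^ n) (hn : 1 ≤ n)
    (hg : 1 ≤ g) (hdvd : (2 * g + 1) ∣ (q + 1))
    {F : Type*} [Field F] [Fintype F] (hF : Fintype.card F = q ^ 2) :
    {P : F × F | P.1 ^ 2 = P.2 ^ (2 * g + 1) + 1}.ncard = q ^ 2 + 2 * g * q := by
  letI : DecidableEq F := Classical.decEq F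
  set m := 2 * g + 1 with hmdef
  have hm1 : 1 ≤ m := by omega
  have hmodd : Odd m := ⟨g, by omega⟩
  -- q is an odd prime power, q ≥ 3
  have hp3 : 3 ≤ p := by
    have := hp.two_le
    omega
  have h3 : 3 ≤ q := by
    rw [hq]
    calc 3 ≤ p := hp3
    _ ≤ p ^ n := Nat.le_self_pow (by omega) p
  have hoddq : Odd q := by
    rw [hq]
    exact (hp.odd_of_ne_two hodd).pow
  have hq1 : 1 ≤ q := by omega
  -- characteristic
  haveI hfp : Fact p.Prime := ⟨hp⟩
  haveI hcharF := ringChar.charP F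
  have hrprime : (ringChar F).Prime := CharP.char_is_prime F (ringChar F)
  have hrdvd : ringChar F ∣ q ^ 2 := by
    rw [← CharP.cast_eq_zero_iff F (ringChar F) (q ^ 2), ← hF]
    exact FiniteField.cast_card_eq_zero F
  have hrp : ringChar F = p := by
    have h1 : ringChar F ∣ p := by
      have h2 : ringChar F ∣ p ^ n := by
        refine hrprime.dvd_of_dvd_pow (n := 2) ?_
        rwa [← hq]
      exact hrprime.dvd_of_dvd_pow h2
    exact (Nat.prime_dvd_prime_iff_eq hrprime hp).mp h1
  have hchar2 : ringChar F ≠ 2 := by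
    rw [hrp]; exact hodd
  haveI : CharP F p := by rw [← hrp]; exact hcharF
  have hfrobA : ∀ a b : F, (a + b) ^ q = a ^ q + b ^ q := by
    intro a b
    rw [hq]
    exact add_pow_char_pow a b p n
  -- arithmetic setup: q + 1 = 2 * (m * e)
  obtain ⟨k, hk⟩ := hdvd
  have hkeven : 2 ∣ k := by
    have h2 : 2 ∣ m * k := by
      rw [← hk]
      rcases hoddq with ⟨t, ht⟩
      exact ⟨t + 1, by omega⟩
    rcases (Nat.Prime.dvd_mul Nat.prime_two).mp h2 with h | h
    · exfalso; omega
    · exact h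
  obtain ⟨e, he⟩ := hkeven
  have hme : q + 1 = 2 * (m * e) := by rw [hk, he]; ring
  have hfact : q ^ 2 - 1 = (q - 1) * (q + 1) := fact_qsq (by omega)
  have hE : Fintype.card F / 2 = (q - 1) * (m * e) := by
    rw [hF]
    have h2 : q ^ 2 - 1 = 2 * ((q - 1) * (m * e)) := by
      rw [hfact, hme]; ring
    have h4 : 1 ≤ q ^ 2 := Nat.one_le_pow _ _ (by omega)
    omega
  have hScard : (univ.filter fun v : F => v ^ q = v).card = q := cardSq hF h3
  have hKcard : (univ.filter fun v : F => v ^ (q - 1) = 1).card = q - 1 :=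
    cardPowEq (by omega) ⟨q + 1, by rw [hF]; exact hfact⟩
  have hchiS : ∀ v : F, v ≠ 0 → v ^ (q - 1) = 1 → quadraticChar F v = 1 :=
    fun v hv0 hv => chi_eq_one hF hchar2 h3 hE hv0 hv
  -- modular inverse of m mod q - 1
  have hmcop : Nat.Coprime m (q - 1) := by
    have hdm := Nat.gcd_dvd_left m (q - 1)
    have hdq := Nat.gcd_dvd_right m (q - 1)
    have hdq1 : Nat.gcd m (q - 1) ∣ q + 1 := hdm.trans ⟨k, hk⟩
    have hd2 : Nat.gcd m (q - 1) ∣ 2 := by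
      have := Nat.dvd_sub hdq1 hdq
      have he2 : q + 1 - (q - 1) = 2 := by omega
      rwa [he2] at this
    rcases (Nat.dvd_prime Nat.prime_two).mp hd2 with h | h
    · exact h
    · exfalso
      have : (2 : ℕ) ∣ m := h ▸ hdm
      omega
  obtain ⟨m', -, hmm'⟩ := Nat.exists_mul_mod_eq_one_of_coprime hmcop (by omega)
  -- the character sum
  have hT := big_sum hF hchar2 h3 hoddq hmodd hm1 hme hE hfrobA hScard hKcard hchiS hmm'
  -- point counting
  have hfibcard : ∀ y : F,
      ((univ.filter fun P : F × F => P.1 ^ 2 = P.2 ^ m + 1).filter (fun P => P.2 = y)).card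
        = ({x : F | x ^ 2 = y ^ m + 1}.toFinset).card := by
    intro y
    refine Finset.card_nbij' (fun P => P.1) (fun x => (x, y)) ?_ ?_ ?_ ?_
    · intro P hP
      simp only [mem_coe, mem_filter, mem_univ, true_and] at hP ⊢
      rw [Set.mem_toFinset]
      rw [← hP.2]
      exact hP.1
    · intro x hx
      simp only [mem_coe, mem_filter, mem_univ, true_and, Set.mem_toFinset] at hx ⊢
      exact ⟨hx, trivial⟩
    · intro P hP
      simp only [mem_coe, mem_filter, mem_univ, true_and] at hP
      exact Prod.ext rfl hP.2.symm
    · intro x hx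
      rfl
  have hNsum : (univ.filter fun P : F × F => P.1 ^ 2 = P.2 ^ m + 1).card
      = ∑ y : F, ({x : F | x ^ 2 = y ^ m + 1}.toFinset).card := by
    rw [Finset.card_eq_sum_card_fiberwise
      (f := Prod.snd) (t := univ) (fun x _ => mem_univ _)]
    exact Finset.sum_congr rfl fun y _ => hfibcard y
  have hZ : ((univ.filter fun P : F × F => P.1 ^ 2 = P.2 ^ m + 1).card : ℤ)
      = ∑ y : F, (quadraticChar F (y ^ m + 1) + 1) := by
    rw [hNsum]
    push_cast
    refine Finset.sum_congr rfl fun y _ => ?_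
    exact quadraticChar_card_sqrts hchar2 (y ^ m + 1)
  rw [Finset.sum_add_distrib, hT, Finset.sum_const, card_univ, hF] at hZ
  have hncard : {P : F × F | P.1 ^ 2 = P.2 ^ m + 1}.ncard
      = (univ.filter fun P : F × F => P.1 ^ 2 = P.2 ^ m + 1).card := by
    rw [Set.ncard_eq_toFinset_card']
    congr 1
    ext P
    simp [Set.mem_toFinset]
  rw [hncard]
  have hfin : ((univ.filter fun P : F × F => P.1 ^ 2 = P.2 ^ m + 1).card : ℤ)
      = ((q ^ 2 + 2 * g * q : ℕ) : ℤ) := by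
    rw [hZ]
    simp only [nsmul_eq_mul, mul_one]
    rw [hmdef]
    push_cast
    ring
  exact_mod_cast hfin
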